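/- In the ring $R = k[s,x,y]/(xy(x-y)(x+y-sy))$ with $k$ of odd characteristic $p$ and $q = p^e$, the Frobenius power quotient module $(x^q,y^q)^p R / (x^{pq}, y^{pq}) R$ is nonzero after localizing at the prime $\mathfrak{p} = (x,y)$; equivalently, $(x,y)$ is an associated prime of $I^{[q]}/J^{[q]}$ where $I = (x,y)^p$ and $J = (x^p, y^p)$. -/

import Mathlib

open MvPolynomial Finset

set_option maxHeartbeats 4000000
set_option synthInstance.maxHeartbeats 400000

private lemma geomG {A : Type*} [CommRing A] (x y : A) (c : ℕ) :
    (∑ j ∈ range (c+1), x ^ j * y ^ (c - j)) * (x - y) = x ^ (c+1) - y ^ (c+1) := by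
  have h := geom_sum₂_mul x y (c+1)
  simpa only [Nat.add_sub_cancel] using h

private lemma geomW {A : Type*} [CommRing A] (x y σ : A) (c : ℕ) :
    (∑ j ∈ range (c+1), y ^ (c - j) * (∑ i ∈ range j, x ^ i * (σ*y) ^ (j - 1 - i))) * (x - σ*y)
      = (∑ j ∈ range (c+1), x ^ j * y ^ (c - j)) - (∑ j ∈ range (c+1), σ ^ j) * y ^ c := by
  rw [Finset.sum_mul, Finset.sum_mul, ← Finset.sum_sub_distrib]
  refine Finset.sum_congr rfl fun j hj => ?_
  have hj' : j ≤ c := Nat.lt_succ_iff.mp (Finset.mem_range.mp hj)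
  have hy : y ^ (c - j) * y ^ j = y ^ c := by rw [← pow_add, Nat.sub_add_cancel hj']
  have hgs := geom_sum₂_mul x (σ*y) j
  calc y ^ (c - j) * (∑ i ∈ range j, x ^ i * (σ*y) ^ (j - 1 - i)) * (x - σ*y)
      = y ^ (c - j) * (x ^ j - (σ*y) ^ j) := by rw [mul_assoc, hgs]
    _ = x ^ j * y ^ (c - j) - σ ^ j * y ^ c := by
        rw [mul_pow]; linear_combination (-(σ^j)) * hy

private lemma key_x {A : Type*} [CommRing A] (x y σ : A) (q2 n2 : ℕ) :
    ∃ w : A,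
      x * ((σ ^ (q2+n2+4) - σ) * x ^ (q2+2) * y ^ (n2+2))
          + (σ - σ ^ (q2+3)) * (y * x ^ (q2+n2+4))
          + (σ ^ (q2+3) - σ ^ (q2+n2+4)) * (x * y ^ (q2+n2+4))
        = w * (x * y * (x - y) * (x - σ * y)) := by
  have h1 := geomW x y σ (q2+1)
  have h2 := geomW x y σ n2
  have h3 := geomG x (σ*y) (q2+1)
  have h4 := geomG x y (q2+1)
  have h5 := geomG x y n2
  have h6 := geom_sum_mul σ (q2+1+1)
  have h7 := geom_sum_mul σ (n2+1)
  refine ⟨(σ ^ (q2+n2+4) - σ ^ (q2+3)) * y ^ (n2+1) *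
        (∑ j ∈ range (q2+1+1), y ^ (q2+1-j) * ∑ i ∈ range j, x ^ i * (σ*y) ^ (j-1-i))
      + (σ - σ ^ (q2+3)) * x ^ (q2+2) *
        (∑ j ∈ range (n2+1), y ^ (n2-j) * ∑ i ∈ range j, x ^ i * (σ*y) ^ (j-1-i))
      + (σ - σ ^ (q2+3)) * (∑ j ∈ range (n2+1), σ ^ j) * y ^ n2 *
        (∑ j ∈ range (q2+1+1), x ^ j * (σ*y) ^ (q2+1-j)), ?_⟩
  linear_combination
    (-(x*y*(x-y)*(σ^(q2+n2+4) - σ^(q2+3))*y^(n2+1))) * h1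
    + (-(x*y*(x-y)*(σ - σ^(q2+3))*x^(q2+2))) * h2
    + (-(x*y*(x-y)*(σ - σ^(q2+3))*(∑ j ∈ range (n2+1), σ ^ j)*y^n2)) * h3
    + (-(x*y*(σ^(q2+n2+4) - σ^(q2+3))*y^(n2+1))) * h4
    + (-(x*y*(σ - σ^(q2+3))*x^(q2+2))) * h5
    + (x*y*(x-y)*y^(q2+n2+2)*σ^(q2+3)*(∑ j ∈ range (n2+1), σ ^ j)) * h6
    + (-(x*y*(x-y)*y^(q2+n2+2)*σ^(q2+3)*(∑ j ∈ range (q2+1+1), σ ^ j))) * h7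

private lemma key_y {A : Type*} [CommRing A] (x y σ : A) (q2 n2 : ℕ) :
    ∃ w : A,
      y * ((σ ^ (q2+n2+4) - σ) * x ^ (q2+2) * y ^ (n2+2))
          + (σ - σ ^ (q2+2)) * (y * x ^ (q2+n2+4))
          + (σ ^ (q2+2) - σ ^ (q2+n2+4)) * (x * y ^ (q2+n2+4))
        = w * (x * y * (x - y) * (x - σ * y)) := by
  have h1 := geomW x y σ q2
  have h2 := geomW x y σ (n2+1)
  have h3 := geomG x (σ*y) q2
  have h4 := geomG x y q2
  have h5 := geomG x y (n2+1)
  have h6 := geom_sum_mul σ (q2+1)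
  have h7 := geom_sum_mul σ (n2+1+1)
  refine ⟨(σ ^ (q2+n2+4) - σ ^ (q2+2)) * y ^ (n2+2) *
        (∑ j ∈ range (q2+1), y ^ (q2-j) * ∑ i ∈ range j, x ^ i * (σ*y) ^ (j-1-i))
      + (σ - σ ^ (q2+2)) * x ^ (q2+1) *
        (∑ j ∈ range (n2+1+1), y ^ (n2+1-j) * ∑ i ∈ range j, x ^ i * (σ*y) ^ (j-1-i))
      + (σ - σ ^ (q2+2)) * (∑ j ∈ range (n2+1+1), σ ^ j) * y ^ (n2+1) *
        (∑ j ∈ range (q2+1), x ^ j * (σ*y) ^ (q2-j)), ?_⟩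
  linear_combination
    (-(x*y*(x-y)*(σ^(q2+n2+4) - σ^(q2+2))*y^(n2+2))) * h1
    + (-(x*y*(x-y)*(σ - σ^(q2+2))*x^(q2+1))) * h2
    + (-(x*y*(x-y)*(σ - σ^(q2+2))*(∑ j ∈ range (n2+1+1), σ ^ j)*y^(n2+1))) * h3
    + (-(x*y*(σ^(q2+n2+4) - σ^(q2+2))*y^(n2+2))) * h4
    + (-(x*y*(σ - σ^(q2+2))*x^(q2+1))) * h5
    + (x*y*(x-y)*y^(q2+n2+2)*σ^(q2+2)*(∑ j ∈ range (n2+1+1), σ ^ j)) * h6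
    + (-(x*y*(x-y)*y^(q2+n2+2)*σ^(q2+2)*(∑ j ∈ range (q2+1), σ ^ j))) * h7
/-- In `R = k[s,x,y]/(g)` with `char k = p` odd, `q = p^e`, the prime `(x,y)` is an
associated prime of `I^{[q]}/J^{[q]}`, where `I = (x,y)^p`, `J = (x^p,y^p)`, so that
`I^{[q]} = (x^q,y^q)^p` and `J^{[q]} = (x^{pq}, y^{pq})`; the quotient is realized as
the image of `I^{[q]}` in `R ⧸ J^{[q]}`. -/
theorem stmt_16 (k : Type*) [Field k] (p : ℕ) (hp : p.Prime) (hodd : p ≠ 2)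
    [CharP k p] (e q : ℕ) (he : 1 ≤ e) (hq : q = p ^ e) :
    Ideal.span
        {Ideal.Quotient.mk
          (Ideal.span {(X 1 : MvPolynomial (Fin 3) k) * X 2 * (X 1 - X 2) *
            (X 1 + X 2 - X 0 * X 2)}) (X 1),
         Ideal.Quotient.mk
          (Ideal.span {(X 1 : MvPolynomial (Fin 3) k) * X 2 * (X 1 - X 2) *
            (X 1 + X 2 - X 0 * X 2)}) (X 2)} ∈
      associatedPrimes
        (MvPolynomial (Fin 3) k ⧸
          Ideal.span {(X 1 : MvPolynomial (Fin 3) k) * X 2 * (X 1 - X 2) *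
            (X 1 + X 2 - X 0 * X 2)})
        (↥(Submodule.map
          (Submodule.mkQ
            ((Ideal.span
              {Ideal.Quotient.mk
                (Ideal.span {(X 1 : MvPolynomial (Fin 3) k) * X 2 * (X 1 - X 2) *
                  (X 1 + X 2 - X 0 * X 2)}) (X 1 ^ (p * q)),
               Ideal.Quotient.mk
                (Ideal.span {(X 1 : MvPolynomial (Fin 3) k) * X 2 * (X 1 - X 2) *
                  (X 1 + X 2 - X 0 * X 2)}) (X 2 ^ (p * q))}) :
              Ideal (MvPolynomial (Fin 3) k ⧸
                Ideal.span {(X 1 : MvPolynomial (Fin 3) k) * X 2 * (X 1 - X 2) *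
                  (X 1 + X 2 - X 0 * X 2)})))
          ((Ideal.span
            {Ideal.Quotient.mk
              (Ideal.span {(X 1 : MvPolynomial (Fin 3) k) * X 2 * (X 1 - X 2) *
                (X 1 + X 2 - X 0 * X 2)}) (X 1 ^ q),
             Ideal.Quotient.mk
              (Ideal.span {(X 1 : MvPolynomial (Fin 3) k) * X 2 * (X 1 - X 2) *
                (X 1 + X 2 - X 0 * X 2)}) (X 2 ^ q)}) ^ p))) := by
  classical
  set x : MvPolynomial (Fin 3) k := X 1 with hxdef
  set y : MvPolynomial (Fin 3) k := X 2 with hydef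
  set s : MvPolynomial (Fin 3) k := X 0 with hsdef
  set g : MvPolynomial (Fin 3) k := x * y * (x - y) * (x + y - s * y) with hgdef
  set Ig : Ideal (MvPolynomial (Fin 3) k) := Ideal.span {g} with hIg
  set mk : MvPolynomial (Fin 3) k →+* (MvPolynomial (Fin 3) k ⧸ Ig) :=
    Ideal.Quotient.mk Ig with hmk
  -- numerics
  have hp2 := hp.two_le
  have hp3 : 3 ≤ p := by omega
  have hq3 : 3 ≤ q := by
    have hle : p ≤ p ^ e := Nat.le_self_pow (by omega) p
    omega
  obtain ⟨q2, hq2⟩ : ∃ t, q = t + 2 := ⟨q - 2, by omega⟩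
  have hn6 : 6 ≤ q * (p - 1) := by
    have h2 : 2 ≤ p - 1 := by omega
    calc 6 = 3 * 2 := rfl
      _ ≤ q * (p - 1) := Nat.mul_le_mul hq3 h2
  obtain ⟨n2, hn2⟩ : ∃ t, q * (p - 1) = t + 2 := ⟨q * (p - 1) - 2, by omega⟩
  have hQ : p * q = q2 + n2 + 4 := by
    have e1 : p * q = q * (p - 1) + q := by
      cases p with
      | zero => omega
      | succ pp => simp only [Nat.succ_sub_one]; ring
    omega
  -- the witness element
  set m : MvPolynomial (Fin 3) k :=
    ((s-1) ^ (q2+n2+4) - (s-1)) * x ^ (q2+2) * y ^ (n2+2) with hm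
  set Ks : Ideal (MvPolynomial (Fin 3) k) :=
    Ideal.span {x ^ (p*q), y ^ (p*q), g} with hKs
  have hgσ : g = x * y * (x - y) * (x - (s-1) * y) := by rw [hgdef]; ring
  have hxK : x ^ (p*q) ∈ Ks := Ideal.subset_span (by simp)
  have hyK : y ^ (p*q) ∈ Ks := Ideal.subset_span (by simp)
  have hgK : g ∈ Ks := Ideal.subset_span (by simp)
  have hxm : x * m ∈ Ks := by
    obtain ⟨w1, hw1⟩ := key_x x y (s - 1) q2 n2
    have hx1 : x * m = w1 * g + ((s-1) ^ (q2+3) - (s-1)) * (y * x ^ (p*q))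
        + ((s-1) ^ (q2+n2+4) - (s-1)^(q2+3)) * (x * y ^ (p*q)) := by
      rw [hm, hQ, hgσ]; linear_combination hw1
    rw [hx1]
    exact add_mem (add_mem (Ideal.mul_mem_left _ _ hgK)
        (Ideal.mul_mem_left _ _ (Ideal.mul_mem_left _ _ hxK)))
      (Ideal.mul_mem_left _ _ (Ideal.mul_mem_left _ _ hyK))
  have hym : y * m ∈ Ks := by
    obtain ⟨w2, hw2⟩ := key_y x y (s - 1) q2 n2
    have hy1 : y * m = w2 * g + ((s-1) ^ (q2+2) - (s-1)) * (y * x ^ (p*q))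
        + ((s-1) ^ (q2+n2+4) - (s-1)^(q2+2)) * (x * y ^ (p*q)) := by
      rw [hm, hQ, hgσ]; linear_combination hw2
    rw [hy1]
    exact add_mem (add_mem (Ideal.mul_mem_left _ _ hgK)
        (Ideal.mul_mem_left _ _ (Ideal.mul_mem_left _ _ hxK)))
      (Ideal.mul_mem_left _ _ (Ideal.mul_mem_left _ _ hyK))
  -- decomposition of Ks elements
  have hdec3 : ∀ h ∈ Ks, ∃ A B Cc : MvPolynomial (Fin 3) k,
      h = A * x ^ (p*q) + B * y ^ (p*q) + Cc * g := by
    intro h hh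
    rw [hKs] at hh
    obtain ⟨A, z, hz, rfl⟩ := Submodule.mem_span_insert.mp hh
    obtain ⟨B, z2, hz2, rfl⟩ := Submodule.mem_span_insert.mp hz
    obtain ⟨Cc, rfl⟩ := Ideal.mem_span_singleton.mp hz2
    exact ⟨A, B, Cc, by simp only [smul_eq_mul]; ring⟩
  -- the projections
  set π : MvPolynomial (Fin 3) k →ₐ[k] Polynomial k :=
    aeval ![Polynomial.X, 0, 0] with hπ
  set ι : Polynomial k →ₐ[k] MvPolynomial (Fin 3) k :=
    Polynomial.aeval (X 0) with hι
  have hπx : π x = 0 := by simp [hπ, hxdef]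
  have hπy : π y = 0 := by simp [hπ, hydef]
  have hπs : π s = Polynomial.X := by simp [hπ, hsdef]
  have hιX : ι Polynomial.X = s := by simp [hι, hsdef]
  have hdecomp : ∀ r : MvPolynomial (Fin 3) k, r - ι (π r) ∈ Ideal.span {x, y} := by
    intro r
    induction r using MvPolynomial.induction_on with
    | C a =>
        have h1 : ι (π (C a)) = C a := by
          rw [hπ, hι]; simp [aeval_C, Polynomial.algebraMap_eq, MvPolynomial.algebraMap_eq]
        rw [h1, sub_self]; exact zero_mem _
    | add f1 f2 hf1 hf2 =>
        rw [map_add, map_add, add_sub_add_comm]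
        exact add_mem hf1 hf2
    | mul_X f i hf =>
        fin_cases i
        · show f * s - ι (π (f * s)) ∈ Ideal.span {x, y}
          have h1 : ι (π (f * s)) = ι (π f) * s := by
            rw [map_mul, hπs, map_mul, hιX]
          rw [h1, ← sub_mul]
          exact Ideal.mul_mem_right _ _ hf
        · show f * x - ι (π (f * x)) ∈ Ideal.span {x, y}
          have h1 : ι (π (f * x)) = 0 := by rw [map_mul, hπx, mul_zero, map_zero]
          rw [h1, sub_zero]
          exact Ideal.mul_mem_left _ _ (Ideal.subset_span (by simp))
        · show f * y - ι (π (f * y)) ∈ Ideal.span {x, y}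
          have h1 : ι (π (f * y)) = 0 := by rw [map_mul, hπy, mul_zero, map_zero]
          rw [h1, sub_zero]
          exact Ideal.mul_mem_left _ _ (Ideal.subset_span (by simp))
  -- primality of the span
  have hπg : ∀ a ∈ Ig, π.toRingHom a = 0 := by
    intro a ha
    rw [hIg] at ha
    obtain ⟨c, rfl⟩ := Ideal.mem_span_singleton.mp ha
    have h1 : π g = 0 := by
      rw [hgdef, map_mul, map_mul, map_mul, hπx, zero_mul, zero_mul, zero_mul]
    show π (g * c) = 0
    rw [map_mul, h1, zero_mul]
  set Φ : (MvPolynomial (Fin 3) k ⧸ Ig) →+* Polynomial k :=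
    Ideal.Quotient.lift Ig π.toRingHom hπg with hΦ
  have hΦmk : ∀ r, Φ (mk r) = π r := fun r => Ideal.Quotient.lift_mk Ig _ _
  have hker : Ideal.span {mk x, mk y} = RingHom.ker Φ := by
    apply le_antisymm
    · rw [Ideal.span_le]
      rintro z hz
      simp only [Set.mem_insert_iff, Set.mem_singleton_iff] at hz
      rcases hz with rfl | rfl
      · simp only [SetLike.mem_coe, RingHom.mem_ker, hΦmk, hπx]
      · simp only [SetLike.mem_coe, RingHom.mem_ker, hΦmk, hπy]
    · rintro z hz
      obtain ⟨r, rfl⟩ := Ideal.Quotient.mk_surjective z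
      rw [RingHom.mem_ker] at hz
      have h0 : π r = 0 := by rwa [hΦmk] at hz
      have h1 := hdecomp r
      rw [h0, map_zero, sub_zero] at h1
      obtain ⟨Aa, Bb, hAB⟩ := Ideal.mem_span_pair.mp h1
      exact Ideal.mem_span_pair.mpr
        ⟨mk Aa, mk Bb, by rw [← map_mul, ← map_mul, ← map_add, hAB]⟩
  have hPrime : (Ideal.span {mk x, mk y}).IsPrime := by
    rw [hker]; exact RingHom.ker_isPrime Φ
  -- the three evaluation maps into (k[s])[t]
  set E1 : MvPolynomial (Fin 3) k →ₐ[k] Polynomial (Polynomial k) :=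
    aeval ![Polynomial.C Polynomial.X, 0, Polynomial.X] with hE1
  set E2 : MvPolynomial (Fin 3) k →ₐ[k] Polynomial (Polynomial k) :=
    aeval ![Polynomial.C Polynomial.X, Polynomial.X, 0] with hE2
  set E4 : MvPolynomial (Fin 3) k →ₐ[k] Polynomial (Polynomial k) :=
    aeval ![Polynomial.C Polynomial.X,
      Polynomial.C (Polynomial.X - 1) * Polynomial.X, Polynomial.X] with hE4
  have hE1x : E1 x = 0 := by simp [hE1, hxdef]
  have hE1y : E1 y = Polynomial.X := by simp [hE1, hydef]
  have hE1s : E1 s = Polynomial.C Polynomial.X := by simp [hE1, hsdef]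
  have hE2x : E2 x = Polynomial.X := by simp [hE2, hxdef]
  have hE2y : E2 y = 0 := by simp [hE2, hydef]
  have hE2s : E2 s = Polynomial.C Polynomial.X := by simp [hE2, hsdef]
  have hE4x : E4 x = Polynomial.C (Polynomial.X - 1) * Polynomial.X := by simp [hE4, hxdef]
  have hE4y : E4 y = Polynomial.X := by simp [hE4, hydef]
  have hE4s : E4 s = Polynomial.C Polynomial.X := by simp [hE4, hsdef]
  -- two maps with the same s-image agree on constant coefficients if variables die at 0
  have hev : ∀ (F G : MvPolynomial (Fin 3) k →ₐ[k] Polynomial (Polynomial k)),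
      F s = G s → Polynomial.eval 0 (F x) = Polynomial.eval 0 (G x) →
      Polynomial.eval 0 (F y) = Polynomial.eval 0 (G y) →
      ∀ A, Polynomial.eval 0 (F A) = Polynomial.eval 0 (G A) := by
    intro F G h0 h1 h2 A
    have hhom : (Polynomial.evalRingHom (0 : Polynomial k)).comp F.toRingHom =
        (Polynomial.evalRingHom (0 : Polynomial k)).comp G.toRingHom := by
      apply MvPolynomial.ringHom_ext
      · intro r
        simp only [RingHom.comp_apply, AlgHom.toRingHom_eq_coe, RingHom.coe_coe]
        rw [show (C r : MvPolynomial (Fin 3) k) = algebraMap k _ r from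
          (MvPolynomial.algebraMap_eq k (Fin 3)).symm ▸ rfl]
        rw [AlgHom.commutes, AlgHom.commutes]
      · intro i
        fin_cases i
        · show (Polynomial.evalRingHom (0:Polynomial k)) (F s)
            = (Polynomial.evalRingHom (0:Polynomial k)) (G s)
          rw [h0]
        · show (Polynomial.evalRingHom (0:Polynomial k)) (F x)
            = (Polynomial.evalRingHom (0:Polynomial k)) (G x)
          simpa [Polynomial.coe_evalRingHom] using h1
        · show (Polynomial.evalRingHom (0:Polynomial k)) (F y)
            = (Polynomial.evalRingHom (0:Polynomial k)) (G y)
          simpa [Polynomial.coe_evalRingHom] using h2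
    have hcf := RingHom.congr_fun hhom A
    simpa [Polynomial.coe_evalRingHom] using hcf
  have hpq0 : p * q ≠ 0 := by omega
  -- the functional kills the three generator multiples
  have kA : ∀ A : MvPolynomial (Fin 3) k,
      (E4 (A * x^(p*q))).coeff (p*q) - (E1 (A * x^(p*q))).coeff (p*q)
        - (Polynomial.X - 1 : Polynomial k)^(p*q) * (E2 (A * x^(p*q))).coeff (p*q) = 0 := by
    intro A
    have h1 : E1 (A * x^(p*q)) = 0 := by
      rw [map_mul, map_pow, hE1x, zero_pow hpq0, mul_zero]
    have h2 : (E2 (A * x^(p*q))).coeff (p*q) = (E2 A).coeff 0 := by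
      rw [map_mul, map_pow, hE2x]
      simp [Polynomial.coeff_mul_X_pow']
    have h4 : (E4 (A * x^(p*q))).coeff (p*q)
        = (Polynomial.X - 1)^(p*q) * (E4 A).coeff 0 := by
      rw [map_mul, map_pow, hE4x, mul_pow, ← Polynomial.C_pow]
      rw [show E4 A * (Polynomial.C ((Polynomial.X-1)^(p*q)) * Polynomial.X^(p*q))
          = Polynomial.C ((Polynomial.X-1)^(p*q)) * (E4 A * Polynomial.X^(p*q)) from by ring]
      rw [Polynomial.coeff_C_mul]
      simp [Polynomial.coeff_mul_X_pow']
    have h5 : (E4 A).coeff 0 = (E2 A).coeff 0 := by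
      rw [Polynomial.coeff_zero_eq_eval_zero, Polynomial.coeff_zero_eq_eval_zero]
      exact hev E4 E2 (by rw [hE4s, hE2s]) (by rw [hE4x, hE2x]; simp) (by rw [hE4y, hE2y]; simp) A
    rw [h1, h2, h4, h5]
    simp
  have kB : ∀ B : MvPolynomial (Fin 3) k,
      (E4 (B * y^(p*q))).coeff (p*q) - (E1 (B * y^(p*q))).coeff (p*q)
        - (Polynomial.X - 1 : Polynomial k)^(p*q) * (E2 (B * y^(p*q))).coeff (p*q) = 0 := by
    intro B
    have h1 : E2 (B * y^(p*q)) = 0 := by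
      rw [map_mul, map_pow, hE2y, zero_pow hpq0, mul_zero]
    have h2 : (E1 (B * y^(p*q))).coeff (p*q) = (E1 B).coeff 0 := by
      rw [map_mul, map_pow, hE1y]
      simp [Polynomial.coeff_mul_X_pow']
    have h4 : (E4 (B * y^(p*q))).coeff (p*q) = (E4 B).coeff 0 := by
      rw [map_mul, map_pow, hE4y]
      simp [Polynomial.coeff_mul_X_pow']
    have h5 : (E4 B).coeff 0 = (E1 B).coeff 0 := by
      rw [Polynomial.coeff_zero_eq_eval_zero, Polynomial.coeff_zero_eq_eval_zero]
      exact hev E4 E1 (by rw [hE4s, hE1s]) (by rw [hE4x, hE1x]; simp) (by rw [hE4y, hE1y]) B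
    rw [h1, h2, h4, h5]
    simp
  have kC : ∀ Cc : MvPolynomial (Fin 3) k,
      (E4 (Cc * g)).coeff (p*q) - (E1 (Cc * g)).coeff (p*q)
        - (Polynomial.X - 1 : Polynomial k)^(p*q) * (E2 (Cc * g)).coeff (p*q) = 0 := by
    intro Cc
    have h1 : E1 g = 0 := by
      rw [hgdef, map_mul, map_mul, map_mul, hE1x]; ring
    have h2 : E2 g = 0 := by
      rw [hgdef, map_mul, map_mul, map_mul, hE2y]; ring
    have h4 : E4 g = 0 := by
      have hlast : E4 (x + y - s*y) = 0 := by
        rw [map_sub, map_add, map_mul, hE4x, hE4y, hE4s, Polynomial.C_sub, Polynomial.C_1]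
        ring
      rw [hgdef, map_mul, hlast, mul_zero]
    simp only [map_mul, h1, h2, h4, mul_zero, Polynomial.coeff_zero]
    ring
  have kill : ∀ h ∈ Ks,
      (E4 h).coeff (p*q) - (E1 h).coeff (p*q)
        - (Polynomial.X - 1 : Polynomial k)^(p*q) * (E2 h).coeff (p*q) = 0 := by
    intro h hh
    obtain ⟨A, B, Cc, rfl⟩ := hdec3 h hh
    simp only [map_add, Polynomial.coeff_add]
    linear_combination kA A + kB B + kC Cc
  -- composite with ι is C
  have hEι : ∀ (F : MvPolynomial (Fin 3) k →ₐ[k] Polynomial (Polynomial k)),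
      F s = Polynomial.C Polynomial.X → ∀ ρ : Polynomial k, F (ι ρ) = Polynomial.C ρ := by
    intro F hF ρ
    induction ρ using Polynomial.induction_on' with
    | add f1 f2 h1 h2 => rw [map_add, map_add, h1, h2, map_add]
    | monomial n a =>
        rw [hι, Polynomial.aeval_monomial, map_mul, map_pow]
        rw [show (X 0 : MvPolynomial (Fin 3) k) = s from rfl, hF]
        rw [AlgHom.commutes, ← Polynomial.C_pow, Polynomial.algebraMap_apply, ← Polynomial.C_mul]
        rw [show (algebraMap k (Polynomial k)) a * Polynomial.X ^ n
          = Polynomial.monomial n a from by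
            rw [Polynomial.algebraMap_eq, Polynomial.C_mul_X_pow_eq_monomial]]
  -- value of the functional on ι ρ * m
  have hE4σ : E4 (s - 1) = Polynomial.C (Polynomial.X - 1) := by
    rw [map_sub, hE4s, map_one, Polynomial.C_sub, Polynomial.C_1]
  have hE4m : E4 m = Polynomial.C (((Polynomial.X-1)^(q2+n2+4) - (Polynomial.X-1))
      * (Polynomial.X-1)^(q2+2)) * Polynomial.X^(q2+n2+4) := by
    rw [hm, map_mul, map_mul, map_sub, map_pow, map_pow, map_pow, hE4x, hE4y, hE4σ, mul_pow]
    simp only [Polynomial.C_mul, Polynomial.C_sub, Polynomial.C_pow, Polynomial.C_1]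
    ring
  have hE1m : E1 m = 0 := by
    rw [hm, map_mul, map_mul, map_pow, hE1x, zero_pow (by omega : q2+2 ≠ 0)]
    ring
  have hE2m : E2 m = 0 := by
    rw [hm, map_mul, map_pow, hE2y, zero_pow (by omega : n2+2 ≠ 0)]
    ring
  have hval : ∀ ρ : Polynomial k,
      (E4 (ι ρ * m)).coeff (p*q) - (E1 (ι ρ * m)).coeff (p*q)
        - (Polynomial.X - 1 : Polynomial k)^(p*q) * (E2 (ι ρ * m)).coeff (p*q)
      = ρ * (((Polynomial.X-1)^(q2+n2+4) - (Polynomial.X-1)) * (Polynomial.X-1)^(q2+2)) := by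
    intro ρ
    have e1 : E1 (ι ρ * m) = 0 := by rw [map_mul, hE1m, mul_zero]
    have e2 : E2 (ι ρ * m) = 0 := by rw [map_mul, hE2m, mul_zero]
    have e4 : E4 (ι ρ * m) = Polynomial.C ρ
        * (Polynomial.C (((Polynomial.X-1:Polynomial k)^(q2+n2+4) - (Polynomial.X-1))
          * (Polynomial.X-1)^(q2+2)) * Polynomial.X^(q2+n2+4)) := by
      rw [map_mul, hEι E4 hE4s ρ, hE4m]
    rw [e1, e2, e4, hQ, Polynomial.coeff_zero, mul_zero, sub_zero, sub_zero,
      Polynomial.coeff_C_mul, Polynomial.coeff_C_mul, Polynomial.coeff_X_pow,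
      if_pos rfl, mul_one]
  -- nonvanishing of the value
  have hXne : (Polynomial.X - 1 : Polynomial k) ≠ 0 := by
    intro hcon
    have h := congrArg (Polynomial.eval 0) hcon
    simp at h
  have hcn0 : (((Polynomial.X-1:Polynomial k)^(q2+n2+4) - (Polynomial.X-1))
      * (Polynomial.X-1)^(q2+2)) ≠ 0 := by
    have h1 : ((Polynomial.X-1:Polynomial k)^(q2+n2+4) - (Polynomial.X-1)) ≠ 0 := by
      intro hcon
      have hnd : ((Polynomial.X-1:Polynomial k)^(q2+n2+4)).natDegree = q2+n2+4 := by
        rw [show (Polynomial.X-1:Polynomial k) = Polynomial.X - Polynomial.C 1 from by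
            rw [Polynomial.C_1]]
        rw [Polynomial.natDegree_pow, Polynomial.natDegree_X_sub_C, mul_one]
      have hmon : ((Polynomial.X-1:Polynomial k)^(q2+n2+4)).Monic := by
        rw [show (Polynomial.X-1:Polynomial k) = Polynomial.X - Polynomial.C 1 from by
            rw [Polynomial.C_1]]
        exact (Polynomial.monic_X_sub_C 1).pow _
      have hdeg : ((Polynomial.X-1:Polynomial k)^(q2+n2+4)).coeff (q2+n2+4) = 1 := by
        have := hmon.coeff_natDegree
        rwa [hnd] at this
      have hc2 : ((Polynomial.X-1:Polynomial k)).coeff (q2+n2+4) = 0 := by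
        apply Polynomial.coeff_eq_zero_of_natDegree_lt
        rw [show (Polynomial.X-1:Polynomial k) = Polynomial.X - Polynomial.C 1 from by
            rw [Polynomial.C_1]]
        rw [Polynomial.natDegree_X_sub_C]
        omega
      have hcc := congrArg (fun pp => Polynomial.coeff pp (q2+n2+4)) hcon
      simp only [Polynomial.coeff_sub, hdeg, hc2, Polynomial.coeff_zero, sub_zero] at hcc
      exact one_ne_zero hcc
    exact mul_ne_zero h1 (pow_ne_zero _ hXne)
  -- annihilator computed at the polynomial level
  have hann : ∀ r : MvPolynomial (Fin 3) k, r * m ∈ Ks → r ∈ Ideal.span {x, y} := by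
    intro r hr
    have h1 := hdecomp r
    obtain ⟨Aa, Bb, hAB⟩ := Ideal.mem_span_pair.mp h1
    have h2 : ι (π r) * m ∈ Ks := by
      have heq : ι (π r) * m = r * m - Aa * (x * m) - Bb * (y * m) := by
        linear_combination m * hAB
      rw [heq]
      exact sub_mem (sub_mem hr (Ideal.mul_mem_left _ _ hxm)) (Ideal.mul_mem_left _ _ hym)
    have h3 := (hval (π r)).symm.trans (kill _ h2)
    have h4 : π r = 0 := by
      rcases mul_eq_zero.mp h3 with h | h
      · exact h
      · exact absurd h hcn0
    rw [h4, map_zero, sub_zero] at h1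
    exact h1
  -- membership of m in I^p
  have hmI : mk m ∈ (Ideal.span {mk (x ^ q), mk (y ^ q)}) ^ p := by
    have hmeq : m = ((s-1) ^ (q2+n2+4) - (s-1)) * (x ^ q * (y ^ q) ^ (p-1)) := by
      rw [hm, ← pow_mul, hn2, hq2]; ring
    rw [hmeq, map_mul, map_mul, map_pow mk (y ^ q) (p-1)]
    refine Ideal.mul_mem_left _ _ ?_
    have h1 : mk (x ^ q) ∈ Ideal.span {mk (x ^ q), mk (y ^ q)} :=
      Ideal.subset_span (by simp)
    have h2 : (mk (y ^ q)) ^ (p-1) ∈ (Ideal.span {mk (x ^ q), mk (y ^ q)}) ^ (p-1) :=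
      Ideal.pow_mem_pow (Ideal.subset_span (by simp)) _
    have h3 := Ideal.mul_mem_mul h1 h2
    have h4 := pow_succ' (Ideal.span {mk (x ^ q), mk (y ^ q)}) (p-1)
    rw [show (p-1)+1 = p from by omega] at h4
    rw [h4]; exact h3
  -- transfer of the J-membership to the polynomial ring
  have hmkg : mk g = 0 := by
    rw [hmk, Ideal.Quotient.eq_zero_iff_mem]
    exact Ideal.subset_span rfl
  have hspanJ : ∀ z : MvPolynomial (Fin 3) k,
      mk z ∈ Ideal.span {mk (x ^ (p*q)), mk (y ^ (p*q))} ↔ z ∈ Ks := by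
    intro z
    constructor
    · intro hz
      have hmap : Ideal.span {mk (x ^ (p*q)), mk (y ^ (p*q))}
          = Ideal.map mk (Ideal.span {x ^ (p*q), y ^ (p*q)}) := by
        rw [Ideal.map_span]
        congr 1
        simp [Set.image_insert_eq]
      rw [hmap, hmk] at hz
      obtain ⟨z0, hz0, hz0e⟩ :=
        (Ideal.mem_map_iff_of_surjective _ Ideal.Quotient.mk_surjective).mp hz
      have hsub : z0 - z ∈ Ig := Ideal.Quotient.eq.mp hz0e
      have h1 : z0 ∈ Ks := by
        rw [hKs]
        refine Ideal.span_mono ?_ hz0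
        intro t ht
        simp only [Set.mem_insert_iff, Set.mem_singleton_iff] at ht
        rcases ht with rfl | rfl <;> simp
      have h2 : z0 - z ∈ Ks := by
        rw [hKs]
        refine Ideal.span_mono ?_ (by rwa [hIg] at hsub)
        intro t ht
        simp only [Set.mem_singleton_iff] at ht
        subst ht; simp
      have h3 := sub_mem h1 h2
      have h4 : z0 - (z0 - z) = z := by ring
      rwa [h4] at h3
    · intro hz
      obtain ⟨A, B, Cc, rfl⟩ := hdec3 z hz
      simp only [map_add, map_mul]
      rw [hmkg, mul_zero, add_zero]
      exact add_mem (Ideal.mul_mem_left _ _ (Ideal.subset_span (by simp)))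
        (Ideal.mul_mem_left _ _ (Ideal.subset_span (by simp)))
  -- final assembly
  refine (AssociatedPrimes.mem_iff.trans Submodule.isAssociatedPrime_iff).mpr ⟨hPrime,
    ⟨(Submodule.mkQ _) (mk m), Submodule.mem_map_of_mem hmI⟩, ?_⟩
  ext r
  rw [Submodule.mem_colon_singleton, Submodule.mem_bot]
  rw [← ZeroMemClass.coe_eq_zero]
  simp only [SetLike.val_smul]
  rw [← map_smul, Submodule.mkQ_apply, Submodule.Quotient.mk_eq_zero, smul_eq_mul]
  constructor
  · intro hrP
    obtain ⟨aR, bR, hab⟩ := Ideal.mem_span_pair.mp hrP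
    obtain ⟨a0, rfl⟩ := Ideal.Quotient.mk_surjective aR
    obtain ⟨b0, rfl⟩ := Ideal.Quotient.mk_surjective bR
    have heq : r * mk m = mk (a0 * (x * m) + b0 * (y * m)) := by
      rw [← hab]
      simp only [map_add, map_mul, ← hmk]
      ring
    show r * mk m ∈ _
    rw [heq]
    exact (hspanJ _).mpr
      (add_mem (Ideal.mul_mem_left _ _ hxm) (Ideal.mul_mem_left _ _ hym))
  · intro hrJ
    obtain ⟨r0, rfl⟩ := Ideal.Quotient.mk_surjective r
    have h1 : mk (r0 * m) ∈ Ideal.span {mk (x ^ (p*q)), mk (y ^ (p*q))} := by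
      rw [map_mul]; exact hrJ
    have h2 : r0 * m ∈ Ks := (hspanJ _).mp h1
    have h3 := hann r0 h2
    obtain ⟨A, B, hab⟩ := Ideal.mem_span_pair.mp h3
    exact Ideal.mem_span_pair.mpr
      ⟨mk A, mk B, by rw [← map_mul, ← map_mul, ← map_add, hab]⟩
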